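/- If in the hash hypergraph an element e has some hash position j = h_i(e) that is not shared with any other element appearing in the input, then the conservative Count-Min estimate of e is exact: c(e) = occ(e). -/

import Mathlib

variable {α : Type*} [DecidableEq α]

/-- Basic Count-Min update: increment `A[h i e]` for every `i` (with multiplicity). -/
def basicStep {n k : ℕ} (h : Fin (k + 1) → α → Fin n) (A : Fin n → ℕ) (e : α) :
    Fin n → ℕ :=
  fun j => A j + (Finset.univ.filter (fun i => h i e = j)).card

/-- The minimum counter value among the hash positions of `e`. -/
def minCounter {n k : ℕ} (h : Fin (k + 1) → α → Fin n) (A : Fin n → ℕ) (e : α) : ℕ :=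
  Finset.univ.inf' Finset.univ_nonempty (fun i => A (h i e))

/-- Conservative Count-Min update: increment only the minimal counters of `e`'s positions. -/
def consStep {n k : ℕ} (h : Fin (k + 1) → α → Fin n) (A : Fin n → ℕ) (e : α) :
    Fin n → ℕ :=
  fun j => if (∃ i, h i e = j) ∧ A j = minCounter h A e then A j + 1 else A j

/-- Counter array after processing input `I` with the basic update rule, from all-zero. -/
def basicRun {n k : ℕ} (h : Fin (k + 1) → α → Fin n) (I : List α) : Fin n → ℕ :=
  I.foldl (basicStep h) (fun _ => 0)

/-- Counter array after processing input `I` with the conservative update rule. -/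
def consRun {n k : ℕ} (h : Fin (k + 1) → α → Fin n) (I : List α) : Fin n → ℕ :=
  I.foldl (consStep h) (fun _ => 0)

/-- Estimate returned by basic Count-Min. -/
def basicEstimate {n k : ℕ} (h : Fin (k + 1) → α → Fin n) (I : List α) (e : α) : ℕ :=
  minCounter h (basicRun h I) e

/-- Estimate returned by conservative Count-Min. -/
def consEstimate {n k : ℕ} (h : Fin (k + 1) → α → Fin n) (I : List α) (e : α) : ℕ :=
  minCounter h (consRun h I) e

lemma consStep_le {α : Type*} [DecidableEq α] {n k : ℕ} (h : Fin (k + 1) → α → Fin n)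
    (A : Fin n → ℕ) (x : α) (j : Fin n) : A j ≤ consStep h A x j := by
  unfold consStep; split <;> omega

lemma aux_inv {α : Type*} [DecidableEq α] {n k : ℕ} (h : Fin (k + 1) → α → Fin n)
    (e : α) (i : Fin (k + 1)) :
    ∀ (I : List α) (A : Fin n → ℕ),
      (∀ x ∈ I, x ≠ e → ∀ i', h i' x ≠ h i e) →
      (∀ i', A (h i e) ≤ A (h i' e)) →
      (I.foldl (consStep h) A) (h i e) = A (h i e) + I.count e ∧
      ∀ i', (I.foldl (consStep h) A) (h i e) ≤ (I.foldl (consStep h) A) (h i' e) := by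
  intro I
  induction I with
  | nil => intro A _ hinv; simpa using hinv
  | cons x I ih =>
    intro A hpriv hinv
    have hmin : minCounter h A e = A (h i e) :=
      le_antisymm (Finset.inf'_le _ (Finset.mem_univ i))
        (Finset.le_inf' _ _ fun i' _ => hinv i')
    by_cases hx : x = e
    · have hstep : consStep h A x (h i e) = A (h i e) + 1 := by
        unfold consStep
        rw [if_pos ⟨⟨i, by rw [hx]⟩, by rw [hx, hmin]⟩]
      have hinv' : ∀ i', consStep h A x (h i e) ≤ consStep h A x (h i' e) := by
        intro i'
        rw [hstep]
        unfold consStep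
        split_ifs with h'
        · have := hinv i'; omega
        · rw [hx] at h'
          push_neg at h'
          have h'' := h' ⟨i', rfl⟩
          rw [hmin] at h''
          have := hinv i'
          omega
      obtain ⟨h1, h2⟩ := ih (consStep h A x) (fun y hy => hpriv y (List.mem_cons_of_mem _ hy)) hinv'
      simp only [List.foldl_cons]
      refine ⟨?_, h2⟩
      rw [h1, hstep, hx, List.count_cons_self]
      omega
    · have hstep : consStep h A x (h i e) = A (h i e) := by
        unfold consStep
        rw [if_neg]
        rintro ⟨⟨i', hi'⟩, -⟩
        exact hpriv x List.mem_cons_self hx i' hi'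
      have hinv' : ∀ i', consStep h A x (h i e) ≤ consStep h A x (h i' e) := by
        intro i'
        rw [hstep]
        exact le_trans (hinv i') (consStep_le h A x _)
      obtain ⟨h1, h2⟩ := ih (consStep h A x) (fun y hy => hpriv y (List.mem_cons_of_mem _ hy)) hinv'
      simp only [List.foldl_cons]
      refine ⟨?_, h2⟩
      rw [h1, hstep, List.count_cons_of_ne hx]

/-- If an element e has a hash position not shared by any other element appearing in the
input, then its conservative Count-Min estimate is exact: c(e) = occ(e). -/
theorem consEstimate_exact_of_private_position {α : Type*} [DecidableEq α] {n k : ℕ}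
    (h : Fin (k + 1) → α → Fin n) (I : List α) (e : α) (i : Fin (k + 1))
    (hpriv : ∀ x ∈ I, x ≠ e → ∀ i', h i' x ≠ h i e) :
    consEstimate h I e = I.count e := by
  obtain ⟨h1, h2⟩ := aux_inv h e i I (fun _ => 0) hpriv (fun _ => le_refl 0)
  unfold consEstimate consRun
  have : minCounter h (I.foldl (consStep h) fun _ => 0) e
      = (I.foldl (consStep h) fun _ => 0) (h i e) :=
    le_antisymm (Finset.inf'_le _ (Finset.mem_univ i))
      (Finset.le_inf' _ _ fun i' _ => h2 i')
  rw [this, h1]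
  omega
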